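/- The quartic form H(x₁,…,x₅) = h(x₁²,…,x₅²), where h(y₁,…,y₅) = (y₁+⋯+y₅)² − 4(y₁y₂ + y₂y₃ + y₃y₄ + y₄y₅ + y₅y₁) is the Horn form, is nonnegative on ℝ⁵. -/
import Mathlib

/-- The Choi–Lam quartic `H(x) = h(x₁²,…,x₅²)` obtained from the Horn form
`h(y) = (Σyᵢ)² − 4(y₁y₂+y₂y₃+y₃y₄+y₄y₅+y₅y₁)` is nonnegative on `ℝ⁵`. -/
theorem stmt3 (x₁ x₂ x₃ x₄ x₅ : ℝ) :
    0 ≤ (x₁ ^ 2 + x₂ ^ 2 + x₃ ^ 2 + x₄ ^ 2 + x₅ ^ 2) ^ 2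
        - 4 * (x₁ ^ 2 * x₂ ^ 2 + x₂ ^ 2 * x₃ ^ 2 + x₃ ^ 2 * x₄ ^ 2
            + x₄ ^ 2 * x₅ ^ 2 + x₅ ^ 2 * x₁ ^ 2) := by
  rcases le_total (x₄ ^ 2) (x₅ ^ 2) with h | h
  · nlinarith [sq_nonneg (x₁^2 - x₂^2 + x₃^2 + x₄^2 - x₅^2), sq_nonneg (x₂*x₄),
      sq_nonneg x₃, mul_nonneg (sq_nonneg x₃) (sub_nonneg.2 h)]
  · nlinarith [sq_nonneg (x₁^2 - x₂^2 + x₃^2 - x₄^2 + x₅^2), sq_nonneg (x₂*x₅),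
      sq_nonneg x₁, mul_nonneg (sq_nonneg x₁) (sub_nonneg.2 h)]
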